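/- arXiv:math/0009149 — 3 statements merged into one kernel-verified Lean document; each statement's English description precedes it below -/
import Mathlib

section
/- Let f : ℂ → ℂ be holomorphic and s the horosphere extension section s(w,t) = (f(w)/t)(E₁ − R₂) + f'(w)E₃ − (t f''(w)/2)(E₁ + R₂). Then ds = −(t² f'''(w)/2)(E₁ + R₂)(ω¹ + iω²), and its pointwise norm satisfies ‖ds(w,t)‖ = |f'''(w)| t², i.e., ‖ds‖ = |f'''(w)| e^{−2d} where d = −log t is the distance from the horosphere t = 1. -/
noncomputable section

/-- Frame sections of the flat bundle `E = ℍ³ × sl₂ℂ` (flat trivialization). -/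
def E1m (w : ℂ) (t : ℝ) : Matrix (Fin 2) (Fin 2) ℂ :=
  !![w / (2 * (t : ℂ)), (t : ℂ) / 2 - w ^ 2 / (2 * (t : ℂ));
     1 / (2 * (t : ℂ)), -(w / (2 * (t : ℂ)))]

def E2m (w : ℂ) (t : ℝ) : Matrix (Fin 2) (Fin 2) ℂ :=
  Complex.I • !![-(w / (2 * (t : ℂ))), (t : ℂ) / 2 + w ^ 2 / (2 * (t : ℂ));
                 -(1 / (2 * (t : ℂ))), w / (2 * (t : ℂ))]

def R2m (w : ℂ) (t : ℝ) : Matrix (Fin 2) (Fin 2) ℂ := Complex.I • E2m w t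

/-- The flat derivative of a section of `E` in the direction `v`. -/
def flatDeriv (S : ℝ × ℝ × ℝ → Matrix (Fin 2) (Fin 2) ℂ) (p v : ℝ × ℝ × ℝ) :
    Matrix (Fin 2) (Fin 2) ℂ :=
  Matrix.of fun i j => fderiv ℝ (fun q => S q i j) p v

/-- An isometry of `ℍ³` taking the base point `(0,1)` to `(w,t)`. -/
def gmat (w : ℂ) (t : ℝ) : Matrix (Fin 2) (Fin 2) ℂ :=
  !![(Real.sqrt t : ℂ), w / (Real.sqrt t : ℂ); 0, 1 / (Real.sqrt t : ℂ)]

def gmatInv (w : ℂ) (t : ℝ) : Matrix (Fin 2) (Fin 2) ℂ :=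
  !![1 / (Real.sqrt t : ℂ), -(w / (Real.sqrt t : ℂ)); 0, (Real.sqrt t : ℂ)]

/-- The squared norm of `X ∈ sl₂ℂ` in the fiber metric
`⟨v,w⟩ₓ = ⟨v(x),w(x)⟩ + ⟨iv(x),iw(x)⟩` at the point `x = (w,t)` of `ℍ³`: translate to the
base point, where the norm of `!![a,b;c,-a]` is `4|a|² + 2|b|² + 2|c|²`. -/
def fiberNormSq (X : Matrix (Fin 2) (Fin 2) ℂ) (w : ℂ) (t : ℝ) : ℝ :=
  let Y := gmatInv w t * X * gmat w t
  4 * Complex.normSq (Y 0 0) + 2 * Complex.normSq (Y 0 1) + 2 * Complex.normSq (Y 1 0)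

lemma key_fderiv (G G' : ℂ → ℂ) (hG : ∀ z, HasDerivAt G (G' z) z) (p v : ℝ × ℝ × ℝ) :
    fderiv ℝ (fun q : ℝ × ℝ × ℝ => G (q.1 + q.2.1 * Complex.I)) p v
      = (v.1 + v.2.1 * Complex.I) * G' (p.1 + p.2.1 * Complex.I) := by
  set L : (ℝ × ℝ × ℝ) →L[ℝ] ℂ :=
    Complex.ofRealCLM.comp (ContinuousLinearMap.fst ℝ ℝ (ℝ × ℝ))
      + ((ContinuousLinearMap.smulRight (1 : ℝ →L[ℝ] ℝ) Complex.I).comp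
          ((ContinuousLinearMap.fst ℝ ℝ ℝ).comp (ContinuousLinearMap.snd ℝ ℝ (ℝ × ℝ)))) with hL
  have hLeq : ∀ q : ℝ × ℝ × ℝ, L q = q.1 + q.2.1 * Complex.I := by
    intro q
    simp [hL, Complex.real_smul]
  have hφ : HasFDerivAt (fun q : ℝ × ℝ × ℝ => (q.1 + q.2.1 * Complex.I : ℂ)) L p :=
    L.hasFDerivAt.congr_of_eventuallyEq
      (Filter.Eventually.of_forall fun q => (hLeq q).symm)
  have hGz := ((hG (p.1 + p.2.1 * Complex.I)).hasFDerivAt.restrictScalars ℝ).comp p hφ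
  rw [show (fun q : ℝ × ℝ × ℝ => G (q.1 + q.2.1 * Complex.I))
      = G ∘ (fun q : ℝ × ℝ × ℝ => (q.1 + q.2.1 * Complex.I : ℂ)) from rfl, hGz.fderiv]
  simp [hLeq v, smul_eq_mul]

lemma fiberNormSq_smul_M (c w : ℂ) (t : ℝ) (ht : 0 < t) :
    fiberNormSq (c • !![w, -w ^ 2; 1, -w]) w t = 2 * Complex.normSq c * t ^ 2 := by
  have h0 : (Real.sqrt t : ℂ) ≠ 0 := by
    simpa using (Real.sqrt_pos.mpr ht).ne'
  have hsq : (Real.sqrt t : ℂ) * (Real.sqrt t : ℂ) = (t : ℂ) := by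
    norm_cast
    exact Real.mul_self_sqrt ht.le
  have hY : gmatInv w t * (c • !![w, -w ^ 2; 1, -w]) * gmat w t = !![0, 0; c * t, 0] := by
    ext i j
    fin_cases i <;> fin_cases j <;>
      simp only [gmat, gmatInv, Matrix.mul_apply, Fin.sum_univ_two, Matrix.smul_apply,
        Matrix.cons_val', Matrix.cons_val_zero, Matrix.cons_val_one, Matrix.head_cons,
        Matrix.head_fin_const, Matrix.empty_val', Matrix.cons_val_fin_one, smul_eq_mul, Fin.zero_eta, Fin.mk_one,
        Matrix.of_apply] <;>
      field_simp
    all_goals try ring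
    linear_combination c * hsq
  simp only [fiberNormSq, hY]
  simp [Complex.normSq_mul, Complex.normSq_ofReal]
  ring

/-- For holomorphic `f`, the horosphere extension
`s = (f(w)/t)(E₁-R₂) + f'(w)E₃ - (t f''(w)/2)(E₁+R₂)` has flat derivative
`ds = -(t² f'''(w)/2)(E₁+R₂)(ω¹ + iω²)` — i.e. on a tangent vector `v = (vx,vy,vt)` at
`(w,t)` it is `-(f'''(w)(vx + i vy)/2) • !![w,-w²;1,-w]` — and pointwise norm
`‖ds(w,t)‖ = |f'''(w)| t² = |f'''(w)| e^{-2d}` where `d = -log t` is the distance from the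
horosphere `t = 1`. -/
theorem ds_of_horosphere_extension (f : ℂ → ℂ) (hf : Differentiable ℂ f) :
    let s : ℝ × ℝ × ℝ → Matrix (Fin 2) (Fin 2) ℂ := fun p =>
      let w : ℂ := p.1 + p.2.1 * Complex.I
      f w • !![0, 1; 0, 0] + deriv f w • !![1 / 2, -w; 0, -(1 / 2)]
        - (iteratedDeriv 2 f w / 2) • !![w, -w ^ 2; 1, -w]
    ∀ x y t : ℝ, 0 < t →
      (∀ vx vy vt : ℝ,
        flatDeriv s (x, y, t) (vx, vy, vt)
          = (-(iteratedDeriv 3 f (x + y * Complex.I) * (vx + vy * Complex.I) / 2))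
              • !![(x + y * Complex.I : ℂ), -(x + y * Complex.I : ℂ) ^ 2;
                   1, -(x + y * Complex.I : ℂ)])
      ∧ Real.sqrt (fiberNormSq (flatDeriv s (x, y, t) (t, 0, 0)) (x + y * Complex.I) t
            + fiberNormSq (flatDeriv s (x, y, t) (0, t, 0)) (x + y * Complex.I) t
            + fiberNormSq (flatDeriv s (x, y, t) (0, 0, t)) (x + y * Complex.I) t)
          = ‖iteratedDeriv 3 f (x + y * Complex.I)‖ * t ^ 2
      ∧ ‖iteratedDeriv 3 f (x + y * Complex.I)‖ * t ^ 2
          = ‖iteratedDeriv 3 f (x + y * Complex.I)‖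
              * Real.exp (-2 * (-Real.log t)) := by
  intro s x y t ht
  have hs : ∀ q : ℝ × ℝ × ℝ, s q =
      f (q.1 + q.2.1 * Complex.I) • !![0, 1; 0, 0]
        + deriv f (q.1 + q.2.1 * Complex.I) •
            !![1 / 2, -(q.1 + q.2.1 * Complex.I); 0, -(1 / 2)]
        - (iteratedDeriv 2 f (q.1 + q.2.1 * Complex.I) / 2) •
            !![(q.1 + q.2.1 * Complex.I : ℂ), -(q.1 + q.2.1 * Complex.I : ℂ) ^ 2;
               1, -(q.1 + q.2.1 * Complex.I : ℂ)] := fun q => rfl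
  have hD1 : Differentiable ℂ (deriv f) := by
    have := ((Differentiable.contDiff hf).iterate_deriv 1).differentiable (by simp)
    simpa using this
  have hD2 : Differentiable ℂ (iteratedDeriv 2 f) := by
    rw [iteratedDeriv_eq_iterate]
    exact ((Differentiable.contDiff hf).iterate_deriv 2).differentiable (by simp)
  have e2 : iteratedDeriv 2 f = deriv (deriv f) := by
    rw [show (2 : ℕ) = 1 + 1 from rfl, iteratedDeriv_succ, iteratedDeriv_one]
  have e3 : iteratedDeriv 3 f = deriv (iteratedDeriv 2 f) := by
    rw [show (3 : ℕ) = 2 + 1 from rfl, iteratedDeriv_succ]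
  have hd1 : ∀ z, HasDerivAt f (deriv f z) z := fun z => (hf z).hasDerivAt
  have hd2 : ∀ z, HasDerivAt (deriv f) (iteratedDeriv 2 f z) z := fun z => by
    rw [e2]; exact (hD1 z).hasDerivAt
  have hd3 : ∀ z, HasDerivAt (iteratedDeriv 2 f) (iteratedDeriv 3 f z) z := fun z => by
    rw [e3]; exact (hD2 z).hasDerivAt
  have hG00 : ∀ z : ℂ, HasDerivAt (fun z : ℂ => deriv f z / 2 - iteratedDeriv 2 f z * z / 2)
      (-(iteratedDeriv 3 f z * z / 2)) z := fun z => by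
    have h := ((hd2 z).div_const 2).sub (((hd3 z).mul (hasDerivAt_id z)).div_const 2)
    refine (h.congr_of_eventuallyEq (Filter.Eventually.of_forall fun w => ?_)).congr_deriv ?_
    · simp
    · simp only [id_eq, Pi.pow_apply]
      ring
  have hG01 : ∀ z : ℂ, HasDerivAt
      (fun z : ℂ => f z - deriv f z * z + iteratedDeriv 2 f z * z ^ 2 / 2)
      (iteratedDeriv 3 f z * z ^ 2 / 2) z := fun z => by
    have h := ((hd1 z).sub ((hd2 z).mul (hasDerivAt_id z))).add
      (((hd3 z).mul ((hasDerivAt_id z).pow 2)).div_const 2)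
    refine (h.congr_of_eventuallyEq (Filter.Eventually.of_forall fun w => ?_)).congr_deriv ?_
    · simp
    · simp only [id_eq, Pi.pow_apply]
      ring
  have hG10 : ∀ z : ℂ, HasDerivAt (fun z : ℂ => -(iteratedDeriv 2 f z / 2))
      (-(iteratedDeriv 3 f z / 2)) z := fun z => ((hd3 z).div_const 2).neg
  have hG11 : ∀ z : ℂ, HasDerivAt
      (fun z : ℂ => -(deriv f z / 2) + iteratedDeriv 2 f z * z / 2)
      (iteratedDeriv 3 f z * z / 2) z := fun z => by
    have h := (((hd2 z).div_const 2).neg).add (((hd3 z).mul (hasDerivAt_id z)).div_const 2)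
    refine (h.congr_of_eventuallyEq (Filter.Eventually.of_forall fun w => ?_)).congr_deriv ?_
    · simp
    · simp only [id_eq, Pi.pow_apply]
      ring
  have main : ∀ vx vy vt : ℝ,
      flatDeriv s (x, y, t) (vx, vy, vt)
        = (-(iteratedDeriv 3 f (x + y * Complex.I) * (vx + vy * Complex.I) / 2))
            • !![(x + y * Complex.I : ℂ), -(x + y * Complex.I : ℂ) ^ 2;
                 1, -(x + y * Complex.I : ℂ)] := by
    intro vx vy vt
    ext i j
    fin_cases i <;> fin_cases j
    · show fderiv ℝ (fun q => s q 0 0) (x, y, t) (vx, vy, vt) = _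
      have hfun : (fun q : ℝ × ℝ × ℝ => s q 0 0)
          = (fun q : ℝ × ℝ × ℝ =>
              (fun z : ℂ => deriv f z / 2 - iteratedDeriv 2 f z * z / 2)
                (q.1 + q.2.1 * Complex.I)) := by
        funext q
        rw [hs q]
        simp
        try ring
      rw [hfun, key_fderiv _ _ hG00]
      simp
      try ring
    · show fderiv ℝ (fun q => s q 0 1) (x, y, t) (vx, vy, vt) = _
      have hfun : (fun q : ℝ × ℝ × ℝ => s q 0 1)
          = (fun q : ℝ × ℝ × ℝ =>
              (fun z : ℂ => f z - deriv f z * z + iteratedDeriv 2 f z * z ^ 2 / 2)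
                (q.1 + q.2.1 * Complex.I)) := by
        funext q
        rw [hs q]
        simp
        try ring
      rw [hfun, key_fderiv _ _ hG01]
      simp
      try ring
    · show fderiv ℝ (fun q => s q 1 0) (x, y, t) (vx, vy, vt) = _
      have hfun : (fun q : ℝ × ℝ × ℝ => s q 1 0)
          = (fun q : ℝ × ℝ × ℝ =>
              (fun z : ℂ => -(iteratedDeriv 2 f z / 2)) (q.1 + q.2.1 * Complex.I)) := by
        funext q
        rw [hs q]
        simp
        try ring
      rw [hfun, key_fderiv _ _ hG10]
      simp
      try ring
    · show fderiv ℝ (fun q => s q 1 1) (x, y, t) (vx, vy, vt) = _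
      have hfun : (fun q : ℝ × ℝ × ℝ => s q 1 1)
          = (fun q : ℝ × ℝ × ℝ =>
              (fun z : ℂ => -(deriv f z / 2) + iteratedDeriv 2 f z * z / 2)
                (q.1 + q.2.1 * Complex.I)) := by
        funext q
        rw [hs q]
        simp
        try ring
      rw [hfun, key_fderiv _ _ hG11]
      simp
      try ring
  refine ⟨main, ?_, ?_⟩
  · rw [main t 0 0, main 0 t 0, main 0 0 t]
    rw [fiberNormSq_smul_M _ _ _ ht, fiberNormSq_smul_M _ _ _ ht, fiberNormSq_smul_M _ _ _ ht]
    have habs : ‖iteratedDeriv 3 f (x + y * Complex.I)‖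
        = Real.sqrt (Complex.normSq (iteratedDeriv 3 f (x + y * Complex.I))) := Complex.norm_def _
    set A := Complex.normSq (iteratedDeriv 3 f (x + y * Complex.I)) with hA
    have h1 : Complex.normSq (-(iteratedDeriv 3 f (x + y * Complex.I)
        * ((t : ℂ) + (0 : ℝ) * Complex.I) / 2)) = A * t ^ 2 / 4 := by
      simp [Complex.normSq_mul, Complex.normSq_div]
      ring
    have h2 : Complex.normSq (-(iteratedDeriv 3 f (x + y * Complex.I)
        * ((0 : ℝ) + (t : ℂ) * Complex.I) / 2)) = A * t ^ 2 / 4 := by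
      simp [Complex.normSq_mul, Complex.normSq_div]
      ring
    have h3 : Complex.normSq (-(iteratedDeriv 3 f (x + y * Complex.I)
        * ((0 : ℝ) + (0 : ℝ) * Complex.I) / 2)) = 0 := by
      simp
    rw [h1, h2, h3]
    rw [show 2 * (A * t ^ 2 / 4) * t ^ 2 + 2 * (A * t ^ 2 / 4) * t ^ 2 + 2 * 0 * t ^ 2
        = A * (t ^ 2) ^ 2 by ring]
    rw [Real.sqrt_mul (Complex.normSq_nonneg _), Real.sqrt_sq (by positivity), habs]
  · rw [show (-2 : ℝ) * (-Real.log t) = ((2 : ℕ) : ℝ) * Real.log t by push_cast; ring,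
      Real.exp_nat_mul, Real.exp_log ht]

end
end

section
/- On the upper half space model of ℍ³ with the flat sl₂ℂ-bundle E, the sections E₁, E₂, E₃ (real lifts of the orthonormal frame) satisfy dE₁ = E₃ω¹ + R₃ω² − R₂ω³, dE₂ = −R₃ω¹ + E₃ω² + R₁ω³, and dE₃ = −(E₁ − R₂)ω¹ − (R₁ + E₂)ω², where d = Σᵢ ωⁱ ∧ (∇_{eᵢ} + ad(Eᵢ)). -/
noncomputable section

/-- The section `E₃` (value `e₃ = t ∂_t`, curl `0` at `(w, t)`). -/
def E3m (w : ℂ) (_t : ℝ) : Matrix (Fin 2) (Fin 2) ℂ :=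
  !![1 / 2, -w; 0, -(1 / 2)]

/-- `Rᵢ = i Eᵢ`. -/
def R1m (w : ℂ) (t : ℝ) : Matrix (Fin 2) (Fin 2) ℂ := Complex.I • E1m w t

def R3m (w : ℂ) (t : ℝ) : Matrix (Fin 2) (Fin 2) ℂ := Complex.I • E3m w t

lemma key (c0 c1 c2 d0 d1 d2 e0 e1 e2 : ℂ) (x y t vx vy vt : ℝ) (ht : t ≠ 0) :
    fderiv ℝ (fun q : ℝ × ℝ × ℝ =>
        c0 + c1 * (q.1 + q.2.1 * Complex.I) + c2 * ((q.1 + q.2.1 * Complex.I) * (q.1 + q.2.1 * Complex.I))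
        + (d0 + d1 * (q.1 + q.2.1 * Complex.I) + d2 * ((q.1 + q.2.1 * Complex.I) * (q.1 + q.2.1 * Complex.I))) * q.2.2
        + (e0 + e1 * (q.1 + q.2.1 * Complex.I) + e2 * ((q.1 + q.2.1 * Complex.I) * (q.1 + q.2.1 * Complex.I))) * ((q.2.2:ℂ))⁻¹)
      (x, y, t) (vx, vy, vt)
    = (c1 + 2 * c2 * (x + y * Complex.I) + (d1 + 2 * d2 * (x + y * Complex.I)) * t
        + (e1 + 2 * e2 * (x + y * Complex.I)) / t) * (vx + vy * Complex.I)
      + (d0 + d1 * (x + y * Complex.I) + d2 * (x + y * Complex.I) ^ 2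
        - (e0 + e1 * (x + y * Complex.I) + e2 * (x + y * Complex.I) ^ 2) / t ^ 2) * vt := by
  have hx : HasFDerivAt (fun q : ℝ × ℝ × ℝ => (q.1 : ℂ))
      (Complex.ofRealCLM.comp (ContinuousLinearMap.fst ℝ ℝ (ℝ × ℝ))) (x, y, t) :=
    Complex.ofRealCLM.hasFDerivAt.comp _ hasFDerivAt_fst
  have hy : HasFDerivAt (fun q : ℝ × ℝ × ℝ => (q.2.1 : ℂ))
      (Complex.ofRealCLM.comp ((ContinuousLinearMap.fst ℝ ℝ ℝ).comp
        (ContinuousLinearMap.snd ℝ ℝ (ℝ × ℝ)))) (x, y, t) :=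
    Complex.ofRealCLM.hasFDerivAt.comp _ (hasFDerivAt_snd (p := ((x, y, t) : ℝ × ℝ × ℝ))).fst
  have hT : HasFDerivAt (fun q : ℝ × ℝ × ℝ => (q.2.2 : ℂ))
      (Complex.ofRealCLM.comp ((ContinuousLinearMap.snd ℝ ℝ ℝ).comp
        (ContinuousLinearMap.snd ℝ ℝ (ℝ × ℝ)))) (x, y, t) :=
    Complex.ofRealCLM.hasFDerivAt.comp _ (hasFDerivAt_snd (p := ((x, y, t) : ℝ × ℝ × ℝ))).snd
  have hw : HasFDerivAt (fun q : ℝ × ℝ × ℝ => (q.1 : ℂ) + q.2.1 * Complex.I) _ (x, y, t) :=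
    hx.add (hy.mul_const Complex.I)
  have hP : ∀ a b c : ℂ, HasFDerivAt
      (fun q : ℝ × ℝ × ℝ => a + b * ((q.1 : ℂ) + q.2.1 * Complex.I)
        + c * (((q.1 : ℂ) + q.2.1 * Complex.I) * ((q.1 : ℂ) + q.2.1 * Complex.I))) _ (x, y, t) :=
    fun a b c => ((hasFDerivAt_const a _).add (hw.const_mul b)).add ((hw.mul hw).const_mul c)
  have htc : ((t : ℂ)) ≠ 0 := by exact_mod_cast ht
  have hInv := HasFDerivAt.comp (𝕜 := ℝ) (x := ((x, y, t) : ℝ × ℝ × ℝ))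
    (g := fun z : ℂ => z⁻¹) (f := fun q : ℝ × ℝ × ℝ => (q.2.2 : ℂ))
    ((hasFDerivAt_inv htc).restrictScalars ℝ) hT
  rw [show ((fun z : ℂ => z⁻¹) ∘ fun q : ℝ × ℝ × ℝ => (q.2.2 : ℂ))
      = fun q : ℝ × ℝ × ℝ => ((q.2.2 : ℂ))⁻¹ from rfl] at hInv
  have hmain := ((hP c0 c1 c2).add ((hP d0 d1 d2).mul hT)).add ((hP e0 e1 e2).mul hInv)
  erw [hmain.fderiv]
  simp [ContinuousLinearMap.smul_apply, ContinuousLinearMap.comp_apply, smul_eq_mul]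
  field_simp
  ring

lemma key' (c0 c1 c2 d0 d1 d2 e0 e1 e2 : ℂ) (x y t vx vy vt : ℝ) (ht : t ≠ 0)
    (f : ℝ × ℝ × ℝ → ℂ)
    (hf : ∀ q : ℝ × ℝ × ℝ, f q =
        c0 + c1 * (q.1 + q.2.1 * Complex.I) + c2 * ((q.1 + q.2.1 * Complex.I) * (q.1 + q.2.1 * Complex.I))
        + (d0 + d1 * (q.1 + q.2.1 * Complex.I) + d2 * ((q.1 + q.2.1 * Complex.I) * (q.1 + q.2.1 * Complex.I))) * q.2.2
        + (e0 + e1 * (q.1 + q.2.1 * Complex.I) + e2 * ((q.1 + q.2.1 * Complex.I) * (q.1 + q.2.1 * Complex.I))) * ((q.2.2:ℂ))⁻¹) :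
    fderiv ℝ f (x, y, t) (vx, vy, vt)
    = (c1 + 2 * c2 * (x + y * Complex.I) + (d1 + 2 * d2 * (x + y * Complex.I)) * t
        + (e1 + 2 * e2 * (x + y * Complex.I)) / t) * (vx + vy * Complex.I)
      + (d0 + d1 * (x + y * Complex.I) + d2 * (x + y * Complex.I) ^ 2
        - (e0 + e1 * (x + y * Complex.I) + e2 * (x + y * Complex.I) ^ 2) / t ^ 2) * vt := by
  rw [funext hf]; exact key c0 c1 c2 d0 d1 d2 e0 e1 e2 x y t vx vy vt ht

set_option maxHeartbeats 1600000

/-- The structure equations `dE₁ = E₃ ω¹ + R₃ ω² - R₂ ω³`,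
`dE₂ = -R₃ ω¹ + E₃ ω² + R₁ ω³`, `dE₃ = -(E₁ - R₂) ω¹ - (R₁ + E₂) ω²` for the flat
derivative of the frame sections, where `ωⁱ` is the coframe dual to `eᵢ`, so that
`ωⁱ(v) = vᵢ / t` for a tangent vector `v = (vx, vy, vt)`. -/
theorem flatDeriv_frame_sections (x y t vx vy vt : ℝ) (ht : 0 < t) :
    flatDeriv (fun q => E1m (q.1 + q.2.1 * Complex.I) q.2.2) (x, y, t) (vx, vy, vt)
        = (vx / t) • E3m (x + y * Complex.I) t + (vy / t) • R3m (x + y * Complex.I) t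
          - (vt / t) • R2m (x + y * Complex.I) t
    ∧ flatDeriv (fun q => E2m (q.1 + q.2.1 * Complex.I) q.2.2) (x, y, t) (vx, vy, vt)
        = -((vx / t) • R3m (x + y * Complex.I) t) + (vy / t) • E3m (x + y * Complex.I) t
          + (vt / t) • R1m (x + y * Complex.I) t
    ∧ flatDeriv (fun q => E3m (q.1 + q.2.1 * Complex.I) q.2.2) (x, y, t) (vx, vy, vt)
        = -((vx / t) • (E1m (x + y * Complex.I) t - R2m (x + y * Complex.I) t))
          - (vy / t) • (R1m (x + y * Complex.I) t + E2m (x + y * Complex.I) t) := by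
  have htn : t ≠ 0 := ht.ne'
  have htc : ((t : ℂ)) ≠ 0 := by exact_mod_cast htn
  refine ⟨?_, ?_, ?_⟩ <;> ext i j <;> fin_cases i <;> fin_cases j <;>
    simp only [flatDeriv, Matrix.of_apply, E1m, E2m, E3m, R1m, R2m, R3m,
      Matrix.smul_apply, Matrix.add_apply, Matrix.sub_apply, Matrix.neg_apply,
      Fin.mk_zero, Fin.mk_one, Fin.isValue,
      Matrix.cons_val', Matrix.cons_val_zero, Matrix.cons_val_one, Matrix.head_cons,
      Matrix.head_fin_const, Matrix.empty_val', Matrix.cons_val_fin_one,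
      smul_eq_mul, Complex.real_smul] <;>
    [ (refine (key' 0 0 0 0 0 0 0 (1/2) 0 x y t vx vy vt htn _ fun q => by simp; try ring).trans ?_;
        push_cast;
        linear_combination ((-1/2 : ℂ)*(y:ℂ)*(vt:ℂ)*Complex.I*((t:ℂ))⁻¹^2 + (-1/2 : ℂ)*(x:ℂ)*(vt:ℂ)*((t:ℂ))⁻¹^2) * Complex.I_sq + (0:ℂ) * (mul_inv_cancel₀ htc));
      (refine (key' 0 0 0 (1/2) 0 0 0 0 (-(1/2)) x y t vx vy vt htn _ fun q => by simp; try ring).trans ?_;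
        push_cast;
        linear_combination ((1/2 : ℂ)*(vt:ℂ)*(t:ℂ)*((t:ℂ))⁻¹ + (1/2 : ℂ)*(y:ℂ)^2*(vt:ℂ)*Complex.I^2*((t:ℂ))⁻¹^2 + (1 : ℂ)*(x:ℂ)*(y:ℂ)*(vt:ℂ)*Complex.I*((t:ℂ))⁻¹^2 + (1/2 : ℂ)*(x:ℂ)^2*(vt:ℂ)*((t:ℂ))⁻¹^2) * Complex.I_sq + ((-1/2 : ℂ)*(vt:ℂ)) * (mul_inv_cancel₀ htc));
      (refine (key' 0 0 0 0 0 0 (1/2) 0 0 x y t vx vy vt htn _ fun q => by simp; try ring).trans ?_;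
        push_cast;
        linear_combination ((-1/2 : ℂ)*(vt:ℂ)*((t:ℂ))⁻¹^2) * Complex.I_sq + (0:ℂ) * (mul_inv_cancel₀ htc));
      (refine (key' 0 0 0 0 0 0 0 (-(1/2)) 0 x y t vx vy vt htn _ fun q => by simp; try ring).trans ?_;
        push_cast;
        linear_combination ((1/2 : ℂ)*(y:ℂ)*(vt:ℂ)*Complex.I*((t:ℂ))⁻¹^2 + (1/2 : ℂ)*(x:ℂ)*(vt:ℂ)*((t:ℂ))⁻¹^2) * Complex.I_sq + (0:ℂ) * (mul_inv_cancel₀ htc));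
      (refine (key' 0 0 0 0 0 0 0 (-(Complex.I/2)) 0 x y t vx vy vt htn _ fun q => by simp; try ring).trans ?_;
        push_cast;
        linear_combination ((-1/2 : ℂ)*(vy:ℂ)*((t:ℂ))⁻¹) * Complex.I_sq + (0:ℂ) * (mul_inv_cancel₀ htc));
      (refine (key' 0 0 0 (Complex.I/2) 0 0 0 0 (Complex.I/2) x y t vx vy vt htn _ fun q => by simp; try ring).trans ?_;
        push_cast;
        linear_combination ((1 : ℂ)*(y:ℂ)*(vy:ℂ)*Complex.I*((t:ℂ))⁻¹ + (1 : ℂ)*(x:ℂ)*(vy:ℂ)*((t:ℂ))⁻¹) * Complex.I_sq + ((-1/2 : ℂ)*(vt:ℂ)*Complex.I) * (mul_inv_cancel₀ htc));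
      (refine (key' 0 0 0 0 0 0 (-(Complex.I/2)) 0 0 x y t vx vy vt htn _ fun q => by simp; try ring).trans ?_;
        push_cast;
        linear_combination (0:ℂ) * Complex.I_sq + (0:ℂ) * (mul_inv_cancel₀ htc));
      (refine (key' 0 0 0 0 0 0 0 (Complex.I/2) 0 x y t vx vy vt htn _ fun q => by simp; try ring).trans ?_;
        push_cast;
        linear_combination ((1/2 : ℂ)*(vy:ℂ)*((t:ℂ))⁻¹) * Complex.I_sq + (0:ℂ) * (mul_inv_cancel₀ htc));
      (refine (key' (1/2) 0 0 0 0 0 0 0 0 x y t vx vy vt htn _ fun q => by simp; try ring).trans ?_;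
        push_cast;
        linear_combination ((1/2 : ℂ)*(y:ℂ)*(vx:ℂ)*Complex.I*((t:ℂ))⁻¹^2 + (1/2 : ℂ)*(x:ℂ)*(vx:ℂ)*((t:ℂ))⁻¹^2) * Complex.I_sq + (0:ℂ) * (mul_inv_cancel₀ htc));
      (refine (key' 0 (-1) 0 0 0 0 0 0 0 x y t vx vy vt htn _ fun q => by simp; try ring).trans ?_;
        push_cast;
        linear_combination ((-1/2 : ℂ)*(vx:ℂ)*(t:ℂ)*((t:ℂ))⁻¹ + (-1/2 : ℂ)*(y:ℂ)^2*(vx:ℂ)*Complex.I^2*((t:ℂ))⁻¹^2 + (-1 : ℂ)*(x:ℂ)*(y:ℂ)*(vx:ℂ)*Complex.I*((t:ℂ))⁻¹^2 + (-1/2 : ℂ)*(x:ℂ)^2*(vx:ℂ)*((t:ℂ))⁻¹^2) * Complex.I_sq + ((1 : ℂ)*(vy:ℂ)*Complex.I + (1 : ℂ)*(vx:ℂ)) * (mul_inv_cancel₀ htc));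
      (refine (key' 0 0 0 0 0 0 0 0 0 x y t vx vy vt htn _ fun q => by simp; try ring).trans ?_;
        push_cast;
        linear_combination ((1/2 : ℂ)*(vx:ℂ)*((t:ℂ))⁻¹^2) * Complex.I_sq + (0:ℂ) * (mul_inv_cancel₀ htc));
      (refine (key' (-(1/2)) 0 0 0 0 0 0 0 0 x y t vx vy vt htn _ fun q => by simp; try ring).trans ?_;
        push_cast;
        linear_combination ((-1/2 : ℂ)*(y:ℂ)*(vx:ℂ)*Complex.I*((t:ℂ))⁻¹^2 + (-1/2 : ℂ)*(x:ℂ)*(vx:ℂ)*((t:ℂ))⁻¹^2) * Complex.I_sq + (0:ℂ) * (mul_inv_cancel₀ htc)) ]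


end
end

section
/- Let M be the rank-two cusp T² × [0,∞) = ⟨z↦z+1, z↦z+τ⟩\(horoball), and for constants b₁, b₂ ∈ ℂ let ω = −(b₁/2)(E₁ − R₂)(ω¹ − iω²) − (b₂ t²/2)(E₁ + R₂)(ω¹ + iω²). Then the pointwise norm satisfies ‖ω(w,t)‖² = |b₁|² + t⁴|b₂|², ω is in L² on M if and only if b₂ = 0, and if b₂ = 0 then ∫_M ‖ω‖² = (|b₁|²/2)·Area(∂M). -/
noncomputable section

open MeasureTheory

/-! ### Auxiliary algebraic lemmas -/

lemma cusp_sub_eq (w : ℂ) (t : ℝ) (ht : 0 < t) :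
    E1m w t - R2m w t = !![0, (t : ℂ); 0, 0] := by
  have ht0 : (t : ℂ) ≠ 0 := by exact_mod_cast ht.ne'
  unfold E1m R2m E2m
  rw [smul_smul, Complex.I_mul_I, neg_one_smul]
  ext i j
  fin_cases i <;> fin_cases j <;> (simp; try field_simp; try ring)

lemma cusp_add_eq (w : ℂ) (t : ℝ) (ht : 0 < t) :
    E1m w t + R2m w t = !![w / t, -(w ^ 2 / t); 1 / t, -(w / t)] := by
  have ht0 : (t : ℂ) ≠ 0 := by exact_mod_cast ht.ne'
  unfold E1m R2m E2m
  rw [smul_smul, Complex.I_mul_I, neg_one_smul]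
  ext i j
  fin_cases i <;> fin_cases j <;> (simp; try field_simp; try ring)

lemma cusp_conj_sub (w : ℂ) (t : ℝ) (ht : 0 < t) :
    gmatInv w t * (E1m w t - R2m w t) * gmat w t = !![0,1;0,0] := by
  have hs : ((Real.sqrt t : ℝ) : ℂ) ^ 2 = (t : ℂ) := by
    rw [← Complex.ofReal_pow, Real.sq_sqrt ht.le]
  have hs0 : ((Real.sqrt t : ℝ) : ℂ) ≠ 0 := by
    simpa using (Real.sqrt_ne_zero'.2 ht)
  rw [cusp_sub_eq w t ht, ← hs]
  unfold gmat gmatInv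
  rw [Matrix.mul_fin_two, Matrix.mul_fin_two]
  ext i j
  fin_cases i <;> fin_cases j <;> (simp; try field_simp; try ring)

lemma cusp_conj_add (w : ℂ) (t : ℝ) (ht : 0 < t) :
    gmatInv w t * (E1m w t + R2m w t) * gmat w t = !![0,0;1,0] := by
  have hs : ((Real.sqrt t : ℝ) : ℂ) ^ 2 = (t : ℂ) := by
    rw [← Complex.ofReal_pow, Real.sq_sqrt ht.le]
  have hs0 : ((Real.sqrt t : ℝ) : ℂ) ≠ 0 := by
    simpa using (Real.sqrt_ne_zero'.2 ht)
  rw [cusp_add_eq w t ht, ← hs]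
  unfold gmat gmatInv
  rw [Matrix.mul_fin_two, Matrix.mul_fin_two]
  ext i j
  fin_cases i <;> fin_cases j <;> (simp; try field_simp; try ring) <;> simp

lemma cusp_conj_lin (w : ℂ) (t : ℝ) (a b : ℂ) (A B : Matrix (Fin 2) (Fin 2) ℂ) :
    gmatInv w t * (a • A + b • B) * gmat w t
      = a • (gmatInv w t * A * gmat w t) + b • (gmatInv w t * B * gmat w t) := by
  rw [Matrix.mul_add, Matrix.add_mul, Matrix.mul_smul, Matrix.mul_smul,
    Matrix.smul_mul, Matrix.smul_mul]

lemma cusp_fiber_eval (w : ℂ) (t : ℝ) (ht : 0 < t) (a b : ℂ) :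
    fiberNormSq (a • (E1m w t - R2m w t) + b • (E1m w t + R2m w t)) w t
      = 2 * Complex.normSq a + 2 * Complex.normSq b := by
  unfold fiberNormSq
  rw [cusp_conj_lin, cusp_conj_sub w t ht, cusp_conj_add w t ht]
  simp

lemma cusp_pointwise (w : ℂ) (t : ℝ) (ht : 0 < t) (b₁ b₂ : ℂ) :
    fiberNormSq ((-(b₁ / 2)) • (E1m w t - R2m w t)
        + (-(b₂ * (t : ℂ) ^ 2 / 2)) • (E1m w t + R2m w t)) w t
    + fiberNormSq ((b₁ * Complex.I / 2) • (E1m w t - R2m w t)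
        + (-(b₂ * (t : ℂ) ^ 2 * Complex.I / 2)) • (E1m w t + R2m w t)) w t
      = ‖b₁‖ ^ 2 + t ^ 4 * ‖b₂‖ ^ 2 := by
  rw [cusp_fiber_eval w t ht, cusp_fiber_eval w t ht]
  simp [Complex.normSq_mul, Complex.normSq_div, ← Complex.sq_norm]
  ring_nf

/-! ### Auxiliary measure-theoretic lemmas -/

open Set

lemma cusp_set_eq (P : Set (ℝ × ℝ)) :
    (MeasurableEquiv.prodAssoc : (ℝ × ℝ) × ℝ ≃ᵐ ℝ × ℝ × ℝ) ⁻¹'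
        {p : ℝ × ℝ × ℝ | (p.1, p.2.1) ∈ P ∧ 1 ≤ p.2.2} = P ×ˢ Ici 1 := by
  ext ⟨⟨x, y⟩, t⟩
  simp [MeasurableEquiv.prodAssoc, Set.mem_prod]

lemma cusp_restrict (P : Set (ℝ × ℝ)) :
    (volume : Measure ((ℝ × ℝ) × ℝ)).restrict (P ×ˢ Ici 1)
      = ((volume : Measure (ℝ × ℝ)).restrict P).prod (volume.restrict (Ici 1)) := by
  rw [Measure.prod_restrict, ← Measure.volume_eq_prod]

lemma cusp_meas (P : Set (ℝ × ℝ)) (hP : MeasurableSet P) :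
    MeasurableSet {p : ℝ × ℝ × ℝ | (p.1, p.2.1) ∈ P ∧ 1 ≤ p.2.2} := by
  apply MeasurableSet.inter
  · exact (measurable_fst.prodMk (measurable_fst.comp measurable_snd)) hP
  · exact (measurable_snd.comp measurable_snd) measurableSet_Ici

lemma cusp_integrableOn_iff (P : Set (ℝ × ℝ)) (hP : MeasurableSet P)
    (hP0 : volume P ≠ 0) (hPt : volume P ≠ ⊤) (f : ℝ → ℝ)
    (hf : AEStronglyMeasurable f (volume.restrict (Ici 1))) :
    IntegrableOn (fun p : ℝ × ℝ × ℝ => f p.2.2)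
        {p : ℝ × ℝ × ℝ | (p.1, p.2.1) ∈ P ∧ 1 ≤ p.2.2} volume
      ↔ IntegrableOn f (Ici 1) volume := by
  have he := (MeasureTheory.volume_preserving_prodAssoc
      (α₁ := ℝ) (β₁ := ℝ) (γ₁ := ℝ)).restrict_preimage (cusp_meas P hP)
  rw [IntegrableOn, ← he.integrable_comp_emb (MeasurableEquiv.measurableEmbedding _)]
  rw [cusp_set_eq, cusp_restrict]
  haveI : IsFiniteMeasure ((volume : Measure (ℝ × ℝ)).restrict P) :=
    ⟨by rwa [Measure.restrict_apply_univ, lt_top_iff_ne_top]⟩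
  have hfun : ((fun p : ℝ × ℝ × ℝ => f p.2.2) ∘
        (MeasurableEquiv.prodAssoc : (ℝ × ℝ) × ℝ ≃ᵐ ℝ × ℝ × ℝ))
      = fun q : (ℝ × ℝ) × ℝ => f q.2 := rfl
  rw [hfun]
  constructor
  · intro h
    have h1 := ((integrable_prod_iff h.aestronglyMeasurable).1 h).1
    have hne : (volume : Measure (ℝ × ℝ)).restrict P ≠ 0 := by
      intro h0
      exact hP0 (by rw [← Measure.restrict_apply_univ, h0]; simp)
    haveI : Filter.NeBot (MeasureTheory.ae ((volume : Measure (ℝ × ℝ)).restrict P)) :=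
      ae_neBot.2 hne
    obtain ⟨x, hx⟩ := h1.exists
    exact hx
  · intro h
    have := (integrable_const (μ := (volume : Measure (ℝ × ℝ)).restrict P) (1 : ℝ)).mul_prod h
    simpa using this

lemma cusp_integral (P : Set (ℝ × ℝ)) (hP : MeasurableSet P)
    (hPt : volume P ≠ ⊤) (f : ℝ → ℝ) :
    ∫ p in {p : ℝ × ℝ × ℝ | (p.1, p.2.1) ∈ P ∧ 1 ≤ p.2.2}, f p.2.2
      = (volume P).toReal * ∫ t in Ici 1, f t := by
  have he := MeasureTheory.volume_preserving_prodAssoc (α₁ := ℝ) (β₁ := ℝ) (γ₁ := ℝ)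
  rw [← he.setIntegral_preimage_emb (MeasurableEquiv.measurableEmbedding _) _ _]
  rw [cusp_set_eq]
  haveI : IsFiniteMeasure ((volume : Measure (ℝ × ℝ)).restrict P) :=
    ⟨by rwa [Measure.restrict_apply_univ, lt_top_iff_ne_top]⟩
  rw [integral_congr_ae (Filter.Eventually.of_forall fun x : (ℝ × ℝ) × ℝ => by
      show f ((MeasurableEquiv.prodAssoc : (ℝ × ℝ) × ℝ ≃ᵐ ℝ × ℝ × ℝ) x).2.2
        = (fun _ : ℝ × ℝ => (1:ℝ)) x.1 * f x.2
      simp [MeasurableEquiv.prodAssoc])]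
  rw [cusp_restrict P, integral_prod_mul (f := fun _ : ℝ × ℝ => (1:ℝ)) (g := f)]
  simp [Measure.restrict_apply_univ, measureReal_def]

lemma cusp_area (τ : ℂ) (hτ : 0 < τ.im) :
    volume ((fun q : ℝ × ℝ => (q.1 + q.2 * τ.re, q.2 * τ.im)) ''
        (Set.Ico (0 : ℝ) 1 ×ˢ Set.Ico (0 : ℝ) 1)) = ENNReal.ofReal τ.im := by
  set L : (ℝ × ℝ) →ₗ[ℝ] (ℝ × ℝ) :=
    ((LinearMap.fst ℝ ℝ ℝ) + τ.re • (LinearMap.snd ℝ ℝ ℝ)).prod (τ.im • LinearMap.snd ℝ ℝ ℝ)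
  have hL : (fun q : ℝ × ℝ => (q.1 + q.2 * τ.re, q.2 * τ.im)) = ⇑L := by
    ext q <;> simp [L, mul_comm]
  have hdet : LinearMap.det L = τ.im := by
    have := LinearMap.det_toMatrix (Module.Basis.finTwoProd ℝ) L
    rw [← this, Matrix.det_fin_two]
    simp [LinearMap.toMatrix_apply, L, Module.Basis.finTwoProd]
  rw [hL, Measure.addHaar_image_linearMap, hdet, abs_of_pos hτ]
  rw [Measure.volume_eq_prod, Measure.prod_prod]
  simp

lemma cusp_para_meas (τ : ℂ) (hτ : 0 < τ.im) :
    MeasurableSet ((fun q : ℝ × ℝ => (q.1 + q.2 * τ.re, q.2 * τ.im)) ''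
        (Set.Ico (0 : ℝ) 1 ×ˢ Set.Ico (0 : ℝ) 1)) := by
  have hne : τ.im ≠ 0 := hτ.ne'
  set g : ℝ × ℝ → ℝ × ℝ := fun p => (p.1 - p.2 / τ.im * τ.re, p.2 / τ.im) with hg
  have himg : (fun q : ℝ × ℝ => (q.1 + q.2 * τ.re, q.2 * τ.im)) ''
        (Set.Ico (0 : ℝ) 1 ×ˢ Set.Ico (0 : ℝ) 1)
      = g ⁻¹' (Set.Ico (0 : ℝ) 1 ×ˢ Set.Ico (0 : ℝ) 1) := by
    ext p
    constructor
    · rintro ⟨q, hq, rfl⟩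
      have : g (q.1 + q.2 * τ.re, q.2 * τ.im) = q := by
        simp only [hg]
        field_simp
        simp [hne]
      simpa [Set.mem_preimage, this]
    · intro h
      refine ⟨g p, h, ?_⟩
      simp only [hg]
      field_simp
      simp [hne]
  rw [himg]
  exact (measurableSet_Ico.prod measurableSet_Ico).preimage (by fun_prop)

lemma cusp_int_c_div_cube (c : ℝ) : IntegrableOn (fun t : ℝ => c / t ^ 3) (Ici 1) := by
  rw [integrableOn_Ici_iff_integrableOn_Ioi]
  have h : IntegrableOn (fun t : ℝ => t ^ (-3 : ℝ)) (Ioi 1) :=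
    (integrableOn_Ioi_rpow_iff zero_lt_one).2 (by norm_num)
  have h2 : IntegrableOn (fun t : ℝ => c * t ^ (-3 : ℝ)) (Ioi 1) := h.const_mul c
  apply IntegrableOn.congr_fun h2 ?_ measurableSet_Ioi
  intro t ht
  show c * t ^ (-3 : ℝ) = c / t ^ 3
  have ht0 : (0:ℝ) < t := lt_trans zero_lt_one ht
  rw [Real.rpow_neg ht0.le, ← Real.rpow_natCast t 3]
  norm_num [div_eq_mul_inv]

lemma cusp_not_int (c₁ c₂ : ℝ) (hc₂ : 0 < c₂) :
    ¬ IntegrableOn (fun t : ℝ => (c₁ + t ^ 4 * c₂) / t ^ 3) (Ici 1) := by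
  intro h
  have h2 : IntegrableOn (fun t : ℝ => (c₁ + t ^ 4 * c₂) / t ^ 3 - c₁ / t ^ 3) (Ici 1) :=
    h.sub (cusp_int_c_div_cube c₁)
  have h3 : IntegrableOn (fun t : ℝ => t ^ (1:ℝ)) (Ioi 1) := by
    have h4 : IntegrableOn
        (fun t : ℝ => c₂⁻¹ * ((c₁ + t ^ 4 * c₂) / t ^ 3 - c₁ / t ^ 3)) (Ioi 1) :=
      ((integrableOn_Ici_iff_integrableOn_Ioi (by simp)).1 h2).const_mul c₂⁻¹
    apply IntegrableOn.congr_fun h4 ?_ measurableSet_Ioi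
    intro t ht
    show c₂⁻¹ * ((c₁ + t ^ 4 * c₂) / t ^ 3 - c₁ / t ^ 3) = t ^ (1:ℝ)
    have ht0 : (0:ℝ) < t := lt_trans zero_lt_one ht
    have ht3 : t ^ 3 ≠ 0 := by positivity
    rw [Real.rpow_one]
    field_simp
    ring
  have := (integrableOn_Ioi_rpow_iff zero_lt_one).1 h3
  norm_num at this

lemma cusp_integral_c_div_cube (c : ℝ) : ∫ t in Ici 1, c / t ^ 3 = c / 2 := by
  rw [integral_Ici_eq_integral_Ioi]
  have hval := integral_Ioi_rpow_of_lt (by norm_num : (-3:ℝ) < -1) zero_lt_one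
  have hcong : ∫ t in Ioi 1, c / t ^ 3 = ∫ t in Ioi (1:ℝ), c * t ^ (-3 : ℝ) := by
    apply setIntegral_congr_fun measurableSet_Ioi
    intro t ht
    show c / t ^ 3 = c * t ^ (-3 : ℝ)
    have ht0 : (0:ℝ) < t := lt_trans zero_lt_one ht
    rw [Real.rpow_neg ht0.le, ← Real.rpow_natCast t 3]
    norm_num [div_eq_mul_inv]
  rw [hcong, integral_const_mul, hval]
  norm_num
  ring

/-- On the rank-two cusp `M = ⟨z ↦ z+1, z ↦ z+τ⟩\{t ≥ 1}` (fundamental domain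
`P × [1, ∞)` with `P` the parallelogram spanned by `1` and `τ`, volume element
`t⁻³ dx dy dt`, boundary torus of area `Im τ`), the `E`-valued 1-form
`ω = -(b₁/2)(E₁-R₂)(ω¹ - iω²) - (b₂t²/2)(E₁+R₂)(ω¹ + iω²)` has pointwise norm
`‖ω(w,t)‖² = |b₁|² + t⁴|b₂|²` (the sum of the squared fiber norms of `ω(e₁)`, `ω(e₂)`,
`ω(e₃) = 0`), is in `L²` on `M` iff `b₂ = 0`, and if `b₂ = 0` then
`∫_M ‖ω‖² = (|b₁|²/2)·Area(∂M)`. -/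
theorem cusp_model_deformation_norm (τ b₁ b₂ : ℂ) (hτ : 0 < τ.im) :
    let ω₁ : ℂ → ℝ → Matrix (Fin 2) (Fin 2) ℂ := fun w t =>
      (-(b₁ / 2)) • (E1m w t - R2m w t) + (-(b₂ * (t : ℂ) ^ 2 / 2)) • (E1m w t + R2m w t)
    let ω₂ : ℂ → ℝ → Matrix (Fin 2) (Fin 2) ℂ := fun w t =>
      (b₁ * Complex.I / 2) • (E1m w t - R2m w t)
        + (-(b₂ * (t : ℂ) ^ 2 * Complex.I / 2)) • (E1m w t + R2m w t)
    let P : Set (ℝ × ℝ) :=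
      (fun q : ℝ × ℝ => (q.1 + q.2 * τ.re, q.2 * τ.im)) ''
        (Set.Ico (0 : ℝ) 1 ×ˢ Set.Ico (0 : ℝ) 1)
    let D : Set (ℝ × ℝ × ℝ) := {p | (p.1, p.2.1) ∈ P ∧ 1 ≤ p.2.2}
    let F : ℝ × ℝ × ℝ → ℝ := fun p =>
      (‖b₁‖ ^ 2 + p.2.2 ^ 4 * ‖b₂‖ ^ 2) / p.2.2 ^ 3
    (∀ (w : ℂ) (t : ℝ), 0 < t →
        fiberNormSq (ω₁ w t) w t + fiberNormSq (ω₂ w t) w t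
          = ‖b₁‖ ^ 2 + t ^ 4 * ‖b₂‖ ^ 2)
    ∧ (IntegrableOn F D volume ↔ b₂ = 0)
    ∧ (b₂ = 0 → ∫ p in D, F p = ‖b₁‖ ^ 2 / 2 * τ.im) := by
  intro ω₁ ω₂ P D F
  have hPmeas : MeasurableSet P := cusp_para_meas τ hτ
  have hPvol : volume P = ENNReal.ofReal τ.im := cusp_area τ hτ
  have hP0 : volume P ≠ 0 := by
    rw [hPvol]
    simp [hτ.le, not_le.2 hτ]
  have hPt : volume P ≠ ⊤ := by
    rw [hPvol]; exact ENNReal.ofReal_ne_top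
  set f : ℝ → ℝ :=
    fun t => (‖b₁‖ ^ 2 + t ^ 4 * ‖b₂‖ ^ 2) / t ^ 3 with hf
  have hfm : AEStronglyMeasurable f (volume.restrict (Ici 1)) := by
    apply Measurable.aestronglyMeasurable
    fun_prop
  refine ⟨fun w t ht => cusp_pointwise w t ht b₁ b₂, ?_, ?_⟩
  · have hiff := cusp_integrableOn_iff P hPmeas hP0 hPt f hfm
    constructor
    · intro h
      by_contra hb
      exact cusp_not_int (‖b₁‖ ^ 2) (‖b₂‖ ^ 2)
        (pow_pos (norm_pos_iff.2 hb) 2) (hiff.1 h)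
    · intro hb
      apply hiff.2
      subst hb
      simpa [hf] using cusp_int_c_div_cube (‖b₁‖ ^ 2)
  · intro hb
    subst hb
    have h := cusp_integral P hPmeas hPt f
    calc ∫ p in D, F p = (volume P).toReal * ∫ t in Ici 1, f t := h
      _ = τ.im * ∫ t in Ici 1, ‖b₁‖ ^ 2 / t ^ 3 := by
          rw [hPvol, ENNReal.toReal_ofReal hτ.le]
          congr 1
          apply setIntegral_congr_fun measurableSet_Ici
          intro t _
          simp [hf]
      _ = ‖b₁‖ ^ 2 / 2 * τ.im := by
          rw [cusp_integral_c_div_cube]; ring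

end
end
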